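/- Let X be a locally compact, non-compact Hausdorff space whose one-point compactification is radial at the point at infinity ⋆. Then for every closed non-compact subset A ⊆ X there exists a closed non-compact subset S ⊆ A such that the compact subsets of S contain a cofinal chain under inclusion (i.e., S is a spoke at infinity). -/

import Mathlib

open Filter Topology Set

universe u v

/-- `x` has a neighbourhood base in the subspace `S` well-ordered by reverse inclusion. -/
def HasWONhdsBase {X : Type u} [TopologicalSpace X] (x : X) (S : Set X) : Prop :=
  ∃ (o : Ordinal.{u}) (B : ↥(Set.Iio o) → Set X),
    (∀ i, B i ⊆ S) ∧ (∀ i j, i ≤ j → B j ⊆ B i) ∧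
    (𝓝[S] x).HasBasis (fun _ => True) B

/-- `X` is radial at `x`. -/
def RadialAt (X : Type u) [TopologicalSpace X] (x : X) : Prop :=
  ∀ A : Set X, x ∈ closure A →
    ∃ (o : Ordinal.{u}) (f : ↥(Set.Iio o) → X), o ≠ 0 ∧
      (∀ i, f i ∈ A) ∧ Filter.Tendsto f Filter.atTop (𝓝 x)

section Aux

variable {X : Type u} [TopologicalSpace X] [T2Space X] [LocallyCompactSpace X]

open OnePoint

/-- There is an ordinal-indexed net of length `o` with values in `E` (viewed inside the
one-point compactification) converging to the point at infinity. -/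
def NetTo (E : Set X) (o : Ordinal.{u}) : Prop :=
  o ≠ 0 ∧ ∃ f : ↥(Set.Iio o) → OnePoint X,
    (∀ i, f i ∈ ((↑) : X → OnePoint X) '' E) ∧
      Filter.Tendsto f Filter.atTop (𝓝 (OnePoint.infty : OnePoint X))

lemma compl_singleton_mem_nhds_infty (x : X) :
    ({((x : X) : OnePoint X)}ᶜ : Set (OnePoint X)) ∈ 𝓝 (OnePoint.infty : OnePoint X) := by
  have h := OnePoint.hasBasis_nhds_infty.mem_of_mem
    (i := ({x} : Set X)) ⟨isClosed_singleton, isCompact_singleton⟩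
  refine mem_of_superset h ?_
  rintro y (⟨z, hz, rfl⟩ | hy)
  · intro hzx
    exact hz (by simpa using OnePoint.coe_injective (by simpa using hzx))
  · simp only [mem_singleton_iff] at hy
    subst hy
    simp [OnePoint.infty_ne_coe]

lemma eventually_not_mem_of_tendsto_infty {o : Ordinal.{u}}
    {f : ↥(Set.Iio o) → OnePoint X}
    (htd : Filter.Tendsto f Filter.atTop (𝓝 (OnePoint.infty : OnePoint X)))
    {K : Set X} (hK : IsCompact K) :
    ∀ᶠ γ in Filter.atTop, f γ ∉ ((↑) : X → OnePoint X) '' K := by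
  have hU : (((↑) : X → OnePoint X) '' Kᶜ ∪ {OnePoint.infty} : Set (OnePoint X)) ∈
      𝓝 (OnePoint.infty : OnePoint X) :=
    OnePoint.hasBasis_nhds_infty.mem_of_mem ⟨hK.isClosed, hK⟩
  filter_upwards [htd hU] with γ hγ
  rintro ⟨x, hxK, hfx⟩
  rcases hγ with ⟨z, hz, hzf⟩ | h
  · rw [← hfx] at hzf
    exact hz (OnePoint.coe_injective hzf ▸ hxK)
  · simp only [mem_singleton_iff] at h
    rw [← hfx] at h
    exact OnePoint.coe_ne_infty x h

lemma infty_mem_closure_image {E : Set X} (h : ¬ IsCompact (closure E)) :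
    (OnePoint.infty : OnePoint X) ∈ closure (((↑) : X → OnePoint X) '' E) := by
  rw [mem_closure_iff_nhds_basis OnePoint.hasBasis_nhds_infty]
  rintro s ⟨hscl, hsc⟩
  have hns : ¬ E ⊆ s := fun hEs =>
    h (hsc.of_isClosed_subset isClosed_closure (closure_minimal hEs hscl))
  obtain ⟨e, heE, hes⟩ := not_subset.1 hns
  exact ⟨(e : OnePoint X), mem_image_of_mem _ heE, Or.inl ⟨e, hes, rfl⟩⟩

lemma netTo_isLimit {E : Set X} {o : Ordinal.{u}} (h : NetTo E o) : Order.IsSuccLimit o := by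
  obtain ⟨ho, f, hmem, htd⟩ := h
  rcases Ordinal.zero_or_succ_or_isSuccLimit o with h0 | ⟨a, ha⟩ | hl
  · exact absurd h0 ho
  · exfalso
    haveI : Nonempty ↥(Set.Iio o) := ⟨⟨a, ha ▸ Order.lt_succ a⟩⟩
    set m : ↥(Set.Iio o) := ⟨a, ha ▸ Order.lt_succ a⟩ with hm
    obtain ⟨e, _, hfe⟩ := hmem m
    obtain ⟨β, hβ⟩ := Filter.eventually_atTop.1 (htd (compl_singleton_mem_nhds_infty e))
    have hβm : β ≤ m := by
      have : β.1 < Order.succ a := ha ▸ β.2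
      exact Subtype.coe_le_coe.1 (Order.lt_succ_iff.1 this)
    exact hβ m hβm (by rw [← hfe]; exact rfl)
  · exact hl

lemma netTo_cof {E : Set X} {o : Ordinal.{u}} (h : NetTo E o) : NetTo E o.cof.ord := by
  obtain ⟨ho, f, hmem, htd⟩ := h
  obtain ⟨g, hg⟩ := Ordinal.exists_fundamental_sequence o
  have hto : o.cof.ord ≠ 0 := by
    rw [Ne, Cardinal.ord_eq_zero, Ordinal.cof_eq_zero]
    exact ho
  haveI : Nonempty ↥(Set.Iio o.cof.ord) := ⟨⟨0, pos_iff_ne_zero.2 hto⟩⟩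
  haveI : Nonempty ↥(Set.Iio o) := ⟨⟨0, pos_iff_ne_zero.2 ho⟩⟩
  set φ : ↥(Set.Iio o.cof.ord) → ↥(Set.Iio o) := fun i => ⟨g i.1 i.2, hg.lt i.2⟩ with hφdef
  have hφ : Filter.Tendsto φ Filter.atTop Filter.atTop := by
    refine Filter.tendsto_atTop_atTop.2 fun b => ?_
    have hb : b.1 < Ordinal.blsub _ g := by rw [hg.blsub_eq]; exact b.2
    obtain ⟨i, hi, hbi⟩ := Ordinal.lt_blsub_iff.1 hb
    refine ⟨⟨i, hi⟩, fun a ha => ?_⟩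
    have : g i hi ≤ g a.1 a.2 := hg.monotone hi a.2 (Subtype.coe_le_coe.2 ha)
    exact Subtype.coe_le_coe.1 (hbi.trans this)
  exact ⟨hto, f ∘ φ, fun i => hmem (φ i), htd.comp hφ⟩

lemma netTo_cof_le {E : Set X} {o : Ordinal.{u}} (h : NetTo E o) :
    Ordinal.cof o ≤ Cardinal.mk ↥E := by
  obtain ⟨ho, f, hmem, htd⟩ := h
  haveI : Nonempty ↥(Set.Iio o) := ⟨⟨0, pos_iff_ne_zero.2 ho⟩⟩
  have hbd : ∀ e : ↥E, ∃ β : ↥(Set.Iio o), ∀ γ, β ≤ γ → f γ ≠ ((e : X) : OnePoint X) := by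
    intro e
    obtain ⟨β, hβ⟩ := Filter.eventually_atTop.1 (htd (compl_singleton_mem_nhds_infty (e : X)))
    exact ⟨β, fun γ hγ => hβ γ hγ⟩
  choose b hb using hbd
  set B : ↥E → Ordinal.{u} := fun e => (b e).1 with hB
  have hlub : o ≤ Ordinal.lsub B := by
    by_contra hlt
    push_neg at hlt
    set γ : ↥(Set.Iio o) := ⟨Ordinal.lsub B, hlt⟩ with hγdef
    obtain ⟨e, he, hfe⟩ := hmem γ
    exact hb ⟨e, he⟩ γ (Subtype.coe_le_coe.1 (Ordinal.lt_lsub B ⟨e, he⟩).le) hfe.symm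
  have heq : Ordinal.lsub B = o :=
    le_antisymm (Ordinal.lsub_le fun e => (b e).2) hlub
  calc Ordinal.cof o = Ordinal.cof (Ordinal.lsub B) := by rw [heq]
    _ ≤ Cardinal.mk ↥E := Ordinal.cof_lsub_le B

end Aux

theorem stmt16 {X : Type u} [TopologicalSpace X] [T2Space X] [LocallyCompactSpace X]
    [NoncompactSpace X]
    (hrad : RadialAt (OnePoint X) OnePoint.infty)
    (A : Set X) (hA : IsClosed A) (hnc : ¬ IsCompact A) :
    ∃ S : Set X, S ⊆ A ∧ IsClosed S ∧ ¬ IsCompact S ∧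
      ∃ C : Set (Set X), (∀ K ∈ C, IsCompact K ∧ K ⊆ S) ∧ IsChain (· ⊆ ·) C ∧
        ∀ K : Set X, IsCompact K → K ⊆ S → ∃ L ∈ C, K ⊆ L := by
  classical
  have hAcl : ¬ IsCompact (closure A) := by rwa [hA.closure_eq]
  have hne : {o : Ordinal.{u} | NetTo A o}.Nonempty := by
    obtain ⟨o, f, ho, hm, htd⟩ := hrad _ (infty_mem_closure_image hAcl)
    exact ⟨o, ho, f, hm, htd⟩
  set κ := sInf {o : Ordinal.{u} | NetTo A o} with hκdef
  have hκ : NetTo A κ := csInf_mem hne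
  have hmin : ∀ o, NetTo A o → κ ≤ o := fun o h => csInf_le' h
  have hlim : Order.IsSuccLimit κ := netTo_isLimit hκ
  set c := κ.cof with hc
  have hκord : c.ord = κ :=
    le_antisymm ((Cardinal.ord_le_ord.2 (Ordinal.cof_le_card κ)).trans (Cardinal.ord_card_le κ))
      (hmin _ (netTo_cof hκ))
  -- Key claim: subsets of `A` of size `< c` have compact closure.
  have key : ∀ E : Set X, E ⊆ A → Cardinal.mk ↥E < c → IsCompact (closure E) := by
    intro E hEA hcard
    by_contra hnc'
    obtain ⟨o, f, ho, hm, htd⟩ := hrad _ (infty_mem_closure_image hnc')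
    have hoE : NetTo E o := ⟨ho, f, hm, htd⟩
    have h2 : NetTo A o.cof.ord := by
      obtain ⟨h0, g, hg, htg⟩ := netTo_cof hoE
      exact ⟨h0, g, fun i => image_mono hEA (hg i), htg⟩
    have h3 : o.cof.ord < κ := by
      rw [← hκord]
      exact Cardinal.ord_lt_ord.2 (lt_of_le_of_lt (netTo_cof_le hoE) hcard)
    exact absurd (hmin _ h2) (not_le.2 h3)
  obtain ⟨hκ0, f, hmem, htd⟩ := hκ
  haveI : Nonempty ↥(Set.Iio κ) := ⟨⟨0, pos_iff_ne_zero.2 hκ0⟩⟩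
  choose xp hxpA hxpf using hmem
  set S := closure (range xp) with hS
  have hRA : range xp ⊆ A := range_subset_iff.2 hxpA
  have hSA : S ⊆ A := closure_minimal hRA hA
  set Init : ↥(Set.Iio κ) → Set X := fun β => xp '' {j | j ≤ β} with hInit
  have hInitA : ∀ β, Init β ⊆ A := fun β => (image_subset_range _ _).trans hRA
  have hInitCard : ∀ β, Cardinal.mk ↥(Init β) < c := by
    intro β
    have hexj : ∀ p : ↥(Init β), ∃ j : {j : ↥(Set.Iio κ) | j ≤ β}, xp j.1 = p.1 := by
      rintro ⟨p, j, hj, rfl⟩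
      exact ⟨⟨j, hj⟩, rfl⟩
    choose emb hemb using hexj
    have hinj : Function.Injective emb := by
      intro p q h
      apply Subtype.ext
      rw [← hemb p, ← hemb q, h]
    have h1 : Cardinal.lift.{u+1} (Cardinal.mk ↥(Init β)) ≤
        Cardinal.lift.{u} (Cardinal.mk {j : ↥(Set.Iio κ) | j ≤ β}) :=
      Cardinal.lift_mk_le'.2 ⟨⟨emb, hinj⟩⟩
    set g : {j : ↥(Set.Iio κ) | j ≤ β} → ↥(Set.Iio (Order.succ β.1)) :=
      fun j => ⟨j.1.1, by
        have : (j.1 : Ordinal) ≤ (β : Ordinal) := Subtype.coe_le_coe.2 j.2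
        exact Order.lt_succ_iff.2 this⟩ with hg
    have hginj : Function.Injective g := by
      intro a b h
      simp only [hg, Subtype.mk.injEq] at h
      have : (a.1 : Ordinal) = (b.1 : Ordinal) := Subtype.mk.inj h
      apply Subtype.ext
      apply Subtype.ext
      exact this
    have h2 : Cardinal.mk {j : ↥(Set.Iio κ) | j ≤ β} ≤
        Cardinal.mk ↥(Set.Iio (Order.succ β.1)) :=
      Cardinal.mk_le_of_injective hginj
    have h3 : Cardinal.mk ↥(Set.Iio (Order.succ β.1)) =
        Cardinal.lift.{u+1} (Order.succ β.1).card := Ordinal.mk_Iio_ordinal _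
    have h4 : (Order.succ β.1).card < c := by
      rw [← Cardinal.lt_ord, hκord]
      exact hlim.succ_lt β.2
    rw [← Cardinal.lift_lt.{u, u+1}]
    calc Cardinal.lift.{u+1} (Cardinal.mk ↥(Init β))
        ≤ Cardinal.lift.{u} (Cardinal.mk {j : ↥(Set.Iio κ) | j ≤ β}) := h1
      _ ≤ Cardinal.lift.{u} (Cardinal.mk ↥(Set.Iio (Order.succ β.1))) := Cardinal.lift_le.2 h2
      _ = Cardinal.lift.{u} (Cardinal.lift.{u+1} (Order.succ β.1).card) := by rw [h3]
      _ = Cardinal.lift.{u+1} (Order.succ β.1).card := Cardinal.lift_lift _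
      _ < Cardinal.lift.{u+1} c := Cardinal.lift_lt.2 h4
  have hInitCpt : ∀ β, IsCompact (closure (Init β)) := fun β =>
    key _ (hInitA β) (hInitCard β)
  have hSnc : ¬ IsCompact S := by
    intro hcpt
    obtain ⟨γ, hγ⟩ := (eventually_not_mem_of_tendsto_infty htd hcpt).exists
    exact hγ ⟨xp γ, subset_closure (mem_range_self γ), hxpf γ⟩
  refine ⟨S, hSA, isClosed_closure, hSnc,
    range (fun β => closure (Init β)), ?_, ?_, ?_⟩
  · rintro K ⟨β, rfl⟩
    exact ⟨hInitCpt β, closure_mono ((image_subset_range _ _))⟩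
  · rintro K1 ⟨β, rfl⟩ K2 ⟨β', rfl⟩ _
    rcases le_total β β' with h | h
    · exact Or.inl (closure_mono (image_mono fun j hj => le_trans hj h))
    · exact Or.inr (closure_mono (image_mono fun j hj => le_trans hj h))
  · intro K hK hKS
    obtain ⟨K', hK', hKK'⟩ := exists_compact_superset hK
    obtain ⟨β₀, hβ₀⟩ := Filter.eventually_atTop.1 (eventually_not_mem_of_tendsto_infty htd hK')
    refine ⟨closure (Init β₀), ⟨β₀, rfl⟩, ?_⟩
    intro p hp
    have hp2 : p ∈ closure (interior K' ∩ range xp) :=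
      isOpen_interior.inter_closure ⟨hKK' hp, hKS hp⟩
    refine closure_mono ?_ hp2
    rintro q ⟨hqK, j, rfl⟩
    refine ⟨j, ?_, rfl⟩
    by_contra hjβ
    have hβj : β₀ ≤ j := le_of_not_ge (by simpa using hjβ)
    exact hβ₀ j hβj ⟨xp j, interior_subset hqK, hxpf j⟩
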